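/- Let f : [ℕ]² → 2 be a coloring with no f-homogeneous set of size k for color 1, for some k. Suppose X = {x₀ < x₁ < ...} is infinite and the induced coloring h(a,b) = f(x_a, x_b) is transitive for at least one color c ∈ {0,1}. Then there exist ℓ ∈ ℕ and a coloring g : ℕ → ℓ such that each g⁻¹(i) is h-homogeneous for color 0, and consequently (by the infinite pigeonhole principle) there is an infinite f-homogeneous set for color 0. -/

import Mathlib

/-- `H` is `f`-homogeneous for color `c`. -/
def Homog (f : ℕ → ℕ → Fin 2) (c : Fin 2) (H : Set ℕ) : Prop :=
  ∀ x ∈ H, ∀ y ∈ H, x < y → f x y = c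


open Finset

/-- Finite Dilworth: a finite set of naturals with a transitive "strictly below"
relation `p` (compatible with `<`) in which every antichain has size `≤ w`
can be partitioned into `w` chains. -/
lemma dil_aux (p : ℕ → ℕ → Prop) (plt : ∀ {a b}, p a b → a < b)
    (ptr : ∀ {a b c}, p a b → p b c → p a c) :
    ∀ n : ℕ, ∀ S : Finset ℕ, S.card ≤ n → ∀ w : ℕ,
      (∀ A ⊆ S, (∀ u ∈ A, ∀ v ∈ A, u < v → ¬ p u v) → A.card ≤ w) →
      ∃ g : ℕ → ℕ, (∀ a ∈ S, g a < w) ∧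
        (∀ a ∈ S, ∀ b ∈ S, g a = g b → a < b → p a b) := by
  classical
  intro n
  induction n with
  | zero =>
    intro S hS w _
    have hSe : S = ∅ := card_eq_zero.mp (Nat.le_zero.mp hS)
    subst hSe
    exact ⟨fun _ => 0, by simp, by simp⟩
  | succ n IH =>
    intro S hS w hb
    rcases S.eq_empty_or_nonempty with rfl | hne
    · exact ⟨fun _ => 0, by simp, by simp⟩
    set m := S.max' hne with hm
    have hmS : m ∈ S := S.max'_mem hne
    set S' := S.erase m with hS'
    have hS'sub : S' ⊆ S := erase_subset _ _
    have hS'card : S'.card ≤ n := by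
      rw [hS', card_erase_of_mem hmS]; omega
    have hS'lt : ∀ u ∈ S', u < m := fun u hu =>
      lt_of_le_of_ne (S.le_max' u (hS'sub hu)) (mem_erase.mp hu).1
    -- the width of S'
    set AC : Finset ℕ → Prop := fun A => ∀ u ∈ A, ∀ v ∈ A, u < v → ¬ p u v with hACdef
    set d := (S'.powerset.filter AC).sup card with hd
    have hd_le : ∀ A ⊆ S', AC A → A.card ≤ d := fun A hA hAac =>
      le_sup (mem_filter.mpr ⟨mem_powerset.mpr hA, hAac⟩)
    obtain ⟨Astar, hAstar, hAseq⟩ :=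
      exists_mem_eq_sup (S'.powerset.filter AC)
        ⟨∅, mem_filter.mpr ⟨mem_powerset.mpr (empty_subset _), by intro u hu; simp at hu⟩⟩ card
    rw [mem_filter, mem_powerset] at hAstar
    have hAssub : Astar ⊆ S' := hAstar.1
    have hAsac : AC Astar := hAstar.2
    have hAscard : Astar.card = d := hAseq.symm
    have hdw : d ≤ w := by
      have := hb Astar (hAssub.trans hS'sub) hAsac
      omega
    obtain ⟨g', hg'c, hg'f⟩ := IH S' hS'card d hd_le
    by_cases hd0 : d = 0
    · -- then S' is empty and S = {m}
      have hS'e : S' = ∅ := by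
        by_contra h
        obtain ⟨u, hu⟩ := nonempty_of_ne_empty h
        have := hd_le {u} (singleton_subset_iff.mpr hu)
          (by intro a ha b hb' hab; simp only [mem_singleton] at ha hb'; omega)
        simp [hd0] at this
      have hSm : S = {m} := by
        apply Finset.eq_singleton_iff_unique_mem.mpr
        refine ⟨hmS, fun y hy => ?_⟩
        by_contra hym
        have : y ∈ S' := mem_erase.mpr ⟨hym, hy⟩
        simp [hS'e] at this
      have hw1 : 1 ≤ w := by
        have := hb {m} (by simp [hSm])
          (by intro u hu v hv huv; simp only [mem_singleton] at hu hv; omega)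
        simpa using this
      refine ⟨fun _ => 0, fun a _ => hw1, fun a ha b hb' _ hab => ?_⟩
      rw [hSm, mem_singleton] at ha hb'
      omega
    have hd1 : 1 ≤ d := Nat.one_le_iff_ne_zero.mpr hd0
    -- every maximum antichain of S' meets every chain
    have hsurj : ∀ B ⊆ S', AC B → B.card = d → ∀ i < d, ∃ b ∈ B, g' b = i := by
      intro B hBsub hBac hBcard i hid
      have hinj : Set.InjOn g' B := by
        intro u hu v hv huv
        by_contra hne'
        rcases Nat.lt_or_ge u v with h | h
        · exact hBac u hu v hv h (hg'f u (hBsub hu) v (hBsub hv) huv h)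
        · have h' : v < u := lt_of_le_of_ne h (fun e => hne' e.symm)
          exact hBac v hv u hu h' (hg'f v (hBsub hv) u (hBsub hu) huv.symm h')
      have himg : B.image g' = range d := by
        apply eq_of_subset_of_card_le
        · intro j hj
          obtain ⟨b, hbB, hbj⟩ := mem_image.mp hj
          exact mem_range.mpr (hbj ▸ hg'c b (hBsub hbB))
        · rw [card_image_of_injOn hinj, hBcard, card_range]
      have : i ∈ B.image g' := himg ▸ mem_range.mpr hid
      obtain ⟨b, hbB, hbi⟩ := mem_image.mp this
      exact ⟨b, hbB, hbi⟩
    -- top elements of chains belonging to maximum antichains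
    set T : ℕ → Finset ℕ := fun i => S'.filter
      (fun c => g' c = i ∧ ∃ B, B ⊆ S' ∧ AC B ∧ B.card = d ∧ c ∈ B) with hTdef
    have hTne : ∀ i < d, (T i).Nonempty := by
      intro i hid
      obtain ⟨b, hbB, hbg⟩ := hsurj Astar hAssub hAsac hAscard i hid
      exact ⟨b, mem_filter.mpr ⟨hAssub hbB, hbg, Astar, hAssub, hAsac, hAscard, hbB⟩⟩
    set a : ℕ → ℕ := fun i => if hne' : (T i).Nonempty then (T i).max' hne' else 0 with hadef
    have ha_mem : ∀ i < d, a i ∈ T i := by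
      intro i hid
      simp only [hadef, dif_pos (hTne i hid)]
      exact (T i).max'_mem _
    have ha_max : ∀ i < d, ∀ c ∈ T i, c ≤ a i := by
      intro i hid c hc
      simp only [hadef, dif_pos (hTne i hid)]
      exact (T i).le_max' c hc
    have ha_S' : ∀ i < d, a i ∈ S' := fun i hid => (mem_filter.mp (ha_mem i hid)).1
    have ha_col : ∀ i < d, g' (a i) = i := fun i hid => (mem_filter.mp (ha_mem i hid)).2.1
    -- comparability within a chain
    have hchain : ∀ u ∈ S', ∀ v ∈ S', g' u = g' v → u ≤ v → u = v ∨ p u v := by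
      intro u hu v hv huv hle
      rcases eq_or_lt_of_le hle with h | h
      · exact Or.inl h
      · exact Or.inr (hg'f u hu v hv huv h)
    -- key: the a i form an antichain
    have hkey : ∀ i < d, ∀ j < d, i ≠ j → ¬ p (a i) (a j) := by
      intro i hi j hj hij hp
      obtain ⟨_, _, B, hBsub, hBac, hBcard, hajB⟩ := mem_filter.mp (ha_mem j hj)
      obtain ⟨b, hbB, hbg⟩ := hsurj B hBsub hBac hBcard i hi
      have hbT : b ∈ T i := mem_filter.mpr ⟨hBsub hbB, hbg, B, hBsub, hBac, hBcard, hbB⟩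
      have hble : b ≤ a i := ha_max i hi b hbT
      have hbp : p b (a j) := by
        rcases hchain b (hBsub hbB) (a i) (ha_S' i hi) (by rw [hbg, ha_col i hi]) hble with rfl | h
        · exact hp
        · exact ptr h hp
      have hbne : b ≠ a j := by
        intro he
        rw [he, ha_col j hj] at hbg
        exact hij hbg.symm
      exact hBac b hbB (a j) hajB (plt hbp) hbp
    by_cases hcomp : ∃ i, i < d ∧ p (a i) m
    · -- remove a chain through a i and m; recurse
      obtain ⟨i, hid, hpim⟩ := hcomp
      set K : Finset ℕ := insert m (S'.filter fun c => g' c = i ∧ (c = a i ∨ p c (a i))) with hKdef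
      have hmK : m ∈ K := mem_insert_self _ _
      have hKS : K ⊆ S := by
        intro u hu
        rcases mem_insert.mp hu with rfl | huf
        · exact hmS
        · exact hS'sub (mem_filter.mp huf).1
      have hKchain : ∀ u ∈ K, ∀ v ∈ K, u < v → p u v := by
        intro u hu v hv huv
        rcases mem_insert.mp hu with rfl | huf
        · exfalso
          rcases mem_insert.mp hv with rfl | hvf
          · omega
          · exact absurd (hS'lt v (mem_filter.mp hvf).1) (by omega)
        rcases mem_insert.mp hv with rfl | hvf
        · obtain ⟨huS', hgu, hcase⟩ := mem_filter.mp huf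
          rcases hcase with rfl | hpu
          · exact hpim
          · exact ptr hpu hpim
        · obtain ⟨huS', hgu, _⟩ := mem_filter.mp huf
          obtain ⟨hvS', hgv, _⟩ := mem_filter.mp hvf
          exact hg'f u huS' v hvS' (by rw [hgu, hgv]) huv
      have hSdiff_sub : S \ K ⊆ S' := by
        intro u hu
        obtain ⟨huS, huK⟩ := mem_sdiff.mp hu
        exact mem_erase.mpr ⟨fun e => huK (e ▸ hmK), huS⟩
      have hbound'' : ∀ A ⊆ S \ K, AC A → A.card ≤ w - 1 := by
        intro B hBsub hBac
        have hBS' : B ⊆ S' := hBsub.trans hSdiff_sub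
        have hBd : B.card ≤ d := hd_le B hBS' hBac
        have hBne : B.card ≠ d := by
          intro hBe
          obtain ⟨b, hbB, hbg⟩ := hsurj B hBS' hBac hBe i hid
          have hbT : b ∈ T i := mem_filter.mpr ⟨hBS' hbB, hbg, B, hBS', hBac, hBe, hbB⟩
          have hble := ha_max i hid b hbT
          have hbK : b ∈ K := by
            apply mem_insert_of_mem
            refine mem_filter.mpr ⟨hBS' hbB, hbg, ?_⟩
            rcases hchain b (hBS' hbB) (a i) (ha_S' i hid) (by rw [hbg, ha_col i hid]) hble
              with h | h
            · exact Or.inl h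
            · exact Or.inr h
          exact (mem_sdiff.mp (hBsub hbB)).2 hbK
        omega
      have hcard'' : (S \ K).card ≤ n := le_trans (card_le_card hSdiff_sub) hS'card
      obtain ⟨g'', hg''c, hg''f⟩ := IH (S \ K) hcard'' (w - 1) hbound''
      refine ⟨fun u => if u ∈ K then w - 1 else g'' u, ?_, ?_⟩
      · intro u huS
        by_cases huK : u ∈ K
        · simp only [if_pos huK]; omega
        · simp only [if_neg huK]
          have := hg''c u (mem_sdiff.mpr ⟨huS, huK⟩)
          omega
      · intro u huS v hvS hgeq huv
        by_cases huK : u ∈ K <;> by_cases hvK : v ∈ K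
        · exact hKchain u huK v hvK huv
        · exfalso
          simp only [if_pos huK, if_neg hvK] at hgeq
          have := hg''c v (mem_sdiff.mpr ⟨hvS, hvK⟩)
          omega
        · exfalso
          simp only [if_neg huK, if_pos hvK] at hgeq
          have := hg''c u (mem_sdiff.mpr ⟨huS, huK⟩)
          omega
        · simp only [if_neg huK, if_neg hvK] at hgeq
          exact hg''f u (mem_sdiff.mpr ⟨huS, huK⟩) v (mem_sdiff.mpr ⟨hvS, hvK⟩) hgeq huv
    · -- m extends the antichain
      push_neg at hcomp
      set A : Finset ℕ := insert m ((range d).image a) with hAdef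
      have hainj : Set.InjOn a (range d) := by
        intro u hu v hv huv
        rw [Finset.coe_range, Set.mem_Iio] at hu hv
        have h1 := ha_col u hu
        have h2 := ha_col v hv
        rw [huv] at h1
        rw [h1] at h2
        exact h2.symm ▸ rfl
      have hmnotin : m ∉ (range d).image a := by
        intro hmem
        obtain ⟨j, hj, hje⟩ := mem_image.mp hmem
        exact absurd (hS'lt _ (ha_S' j (mem_range.mp hj))) (by omega)
      have hAsubS : A ⊆ S := by
        intro u hu
        rcases mem_insert.mp hu with rfl | huf
        · exact hmS
        · obtain ⟨j, hj, hje⟩ := mem_image.mp huf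
          exact hS'sub (hje ▸ ha_S' j (mem_range.mp hj))
      have hAac : AC A := by
        intro u hu v hv huv hp
        rcases mem_insert.mp hu with rfl | huf
        · rcases mem_insert.mp hv with rfl | hvf
          · omega
          · obtain ⟨j, hj, hje⟩ := mem_image.mp hvf
            exact absurd (hS'lt v (hje ▸ ha_S' j (mem_range.mp hj))) (by omega)
        rcases mem_insert.mp hv with rfl | hvf
        · obtain ⟨j, hj, hje⟩ := mem_image.mp huf
          exact hcomp j (mem_range.mp hj) (hje ▸ hp)
        · obtain ⟨j, hj, hje⟩ := mem_image.mp huf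
          obtain ⟨l, hl, hle⟩ := mem_image.mp hvf
          have hjl : j ≠ l := by
            intro e; rw [e, hle] at hje; omega
          exact hkey j (mem_range.mp hj) l (mem_range.mp hl) hjl (hje ▸ hle ▸ hp)
      have hAcard : A.card = d + 1 := by
        rw [hAdef, card_insert_of_notMem hmnotin, card_image_of_injOn hainj, card_range]
      have hdw1 : d + 1 ≤ w := by
        have := hb A hAsubS hAac
        omega
      refine ⟨fun u => if u = m then d else g' u, ?_, ?_⟩
      · intro u huS
        by_cases hum : u = m
        · simp only [if_pos hum]; omega
        · simp only [if_neg hum]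
          have := hg'c u (mem_erase.mpr ⟨hum, huS⟩)
          omega
      · intro u huS v hvS hgeq huv
        by_cases hum : u = m
        · exfalso
          subst hum
          exact absurd (S.le_max' v hvS) (by omega)
        by_cases hvm : v = m
        · exfalso
          simp only [if_neg hum, if_pos hvm] at hgeq
          have := hg'c u (mem_erase.mpr ⟨hum, huS⟩)
          omega
        · simp only [if_neg hum, if_neg hvm] at hgeq
          exact hg'f u (mem_erase.mpr ⟨hum, huS⟩) v (mem_erase.mpr ⟨hvm, hvS⟩) hgeq huv

open Finset

lemma fin2cases (v : Fin 2) : v = 0 ∨ v = 1 := by omega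

/-- Pigeonhole: a bounded coloring with `0`-homogeneous fibers gives an infinite
`0`-homogeneous set. -/
lemma pigeon (f : ℕ → ℕ → Fin 2) (x : ℕ → ℕ) (hx : StrictMono x) (ℓ : ℕ) (g : ℕ → ℕ)
    (hgl : ∀ a, g a < ℓ)
    (hfib : ∀ i a b, g a = i → g b = i → a < b → f (x a) (x b) = 0) :
    ∃ H : Set ℕ, H.Infinite ∧ Homog f 0 H := by
  have hinf : ∃ i, {a | g a = i}.Infinite := by
    by_contra h
    push_neg at h
    have hsub : (Set.univ : Set ℕ) ⊆ ⋃ i ∈ Finset.range ℓ, {a | g a = i} := by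
      intro a _
      simp only [Set.mem_iUnion, mem_range, Set.mem_setOf_eq]
      exact ⟨g a, hgl a, rfl⟩
    exact Set.infinite_univ
      (Set.Finite.subset (Set.Finite.biUnion (Finset.range ℓ).finite_toSet fun i _ => h i) hsub)
  obtain ⟨i, hi⟩ := hinf
  refine ⟨x '' {a | g a = i}, hi.image (Set.injOn_of_injective hx.injective), ?_⟩
  rintro u ⟨a, ha, rfl⟩ v ⟨b, hb, rfl⟩ huv
  exact hfib i a b ha hb (hx.lt_iff_lt.mp huv)

theorem stmt_18 (f : ℕ → ℕ → Fin 2) (k : ℕ)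
    (hk : ¬ ∃ S : Finset ℕ, S.card = k ∧ Homog f 1 ↑S)
    (x : ℕ → ℕ) (hx : StrictMono x)
    (htrans : ∃ c : Fin 2, ∀ a b d : ℕ, a < b → b < d →
      f (x a) (x b) = c → f (x b) (x d) = c → f (x a) (x d) = c) :
    (∃ ℓ : ℕ, ∃ g : ℕ → ℕ, (∀ a, g a < ℓ) ∧
      ∀ i : ℕ, ∀ a b : ℕ, g a = i → g b = i → a < b → f (x a) (x b) = 0) ∧
    ∃ H : Set ℕ, H.Infinite ∧ Homog f 0 H := by
  classical
  have hk2 : 2 ≤ k := by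
    by_contra h
    push_neg at h
    interval_cases k
    · exact hk ⟨∅, card_empty, by intro u hu; simp at hu⟩
    · refine hk ⟨{0}, card_singleton 0, ?_⟩
      intro u hu v hv huv
      simp only [coe_singleton, Set.mem_singleton_iff] at hu hv
      omega
  -- bound on 1-cliques
  have hclique : ∀ A : Finset ℕ,
      (∀ u ∈ A, ∀ v ∈ A, u < v → f (x u) (x v) = 1) → A.card ≤ k - 1 := by
    intro A hA
    by_contra h
    push_neg at h
    obtain ⟨B, hBA, hBcard⟩ := Finset.exists_subset_card_eq (s := A) (n := k) (by omega)
    refine hk ⟨B.image x, ?_, ?_⟩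
    · rw [card_image_of_injective _ hx.injective, hBcard]
    · intro u hu v hv huv
      simp only [coe_image, Set.mem_image, mem_coe] at hu hv
      obtain ⟨a, ha, rfl⟩ := hu
      obtain ⟨b, hb, rfl⟩ := hv
      exact hA a (hBA ha) b (hBA hb) (hx.lt_iff_lt.mp huv)
  obtain ⟨c, hc⟩ := htrans
  rcases fin2cases c with rfl | rfl
  · -- color 0 transitive: Dilworth + ultrafilter compactness
    set p : ℕ → ℕ → Prop := fun u v => u < v ∧ f (x u) (x v) = 0 with hpdef
    have hb : ∀ A : Finset ℕ, (∀ u ∈ A, ∀ v ∈ A, u < v → ¬ p u v) → A.card ≤ k - 1 := by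
      intro A hA
      refine hclique A fun u hu v hv huv => ?_
      rcases fin2cases (f (x u) (x v)) with h | h
      · exact absurd ⟨huv, h⟩ (hA u hu v hv huv)
      · exact h
    have hdil : ∀ n : ℕ, ∃ g : ℕ → ℕ, (∀ a ∈ range n, g a < k - 1) ∧
        (∀ a ∈ range n, ∀ b ∈ range n, g a = g b → a < b → p a b) :=
      fun n => dil_aux p (fun h => h.1)
        (fun h1 h2 => ⟨h1.1.trans h2.1, hc _ _ _ h1.1 h2.1 h1.2 h2.2⟩)
        (range n).card (range n) le_rfl (k - 1) (fun A _ hA => hb A hA)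
    choose G hG1 hG2 using hdil
    obtain ⟨U, hU⟩ := Ultrafilter.exists_le (Filter.cofinite : Filter ℕ)
    have hgex : ∀ a : ℕ, ∃ i, i < k - 1 ∧ {n | a < n ∧ G n a = i} ∈ U := by
      intro a
      have hmem : {n : ℕ | a < n} ∈ U := by
        refine hU (Filter.mem_cofinite.mpr ((Set.finite_Iic a).subset ?_))
        intro n hn
        simp only [Set.mem_compl_iff, Set.mem_setOf_eq, not_lt] at hn
        exact hn
      have hsub : {n : ℕ | a < n} ⊆ ⋃ i ∈ Set.Iio (k - 1), {n | a < n ∧ G n a = i} := by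
        intro n hn
        simp only [Set.mem_iUnion, Set.mem_Iio, Set.mem_setOf_eq]
        exact ⟨G n a, hG1 n a (mem_range.mpr hn), hn, rfl⟩
      have hunion : (⋃ i ∈ Set.Iio (k - 1), {n | a < n ∧ G n a = i}) ∈ U :=
        Filter.mem_of_superset hmem hsub
      obtain ⟨i, hi, hiU⟩ :=
        (Ultrafilter.finite_biUnion_mem_iff (Set.finite_Iio (k - 1))).mp hunion
      exact ⟨i, hi, hiU⟩
    choose g hg1 hg2 using hgex
    have part1 : ∀ i a b : ℕ, g a = i → g b = i → a < b → f (x a) (x b) = 0 := by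
      intro i a b hga hgb hab
      have hne : ({n | a < n ∧ G n a = g a} ∩ {n | b < n ∧ G n b = g b}).Nonempty :=
        Filter.nonempty_of_mem (Filter.inter_mem (hg2 a) (hg2 b))
      obtain ⟨n, ⟨hna, hGa⟩, hnb, hGb⟩ := hne
      exact (hG2 n a (mem_range.mpr hna) b (mem_range.mpr hnb)
        (by rw [hGa, hGb, hga, hgb]) hab).2
    exact ⟨⟨k - 1, g, fun a => hg1 a, part1⟩, pigeon f x hx (k - 1) g hg1 part1⟩
  · -- color 1 transitive: Mirsky-style
    set D : ℕ → Finset (Finset ℕ) := fun a => (Finset.range (a + 1)).powerset.filter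
      (fun T => a ∈ T ∧ ∀ u ∈ T, ∀ v ∈ T, u < v → f (x u) (x v) = 1) with hDdef
    set g : ℕ → ℕ := fun a => (D a).sup card with hgdef
    have hDa : ∀ a, {a} ∈ D a := by
      intro a
      refine mem_filter.mpr ⟨mem_powerset.mpr (singleton_subset_iff.mpr
        (mem_range.mpr (by omega))), mem_singleton_self a, ?_⟩
      intro u hu v hv huv
      simp only [mem_singleton] at hu hv
      omega
    have hg_lt : ∀ a, g a < k := by
      intro a
      have : g a ≤ k - 1 := Finset.sup_le fun T hT => hclique T (mem_filter.mp hT).2.2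
      omega
    have hg_mono : ∀ a b, a < b → f (x a) (x b) = 1 → g a < g b := by
      intro a b hab hfab
      obtain ⟨T, hTmem, hTsup⟩ := exists_mem_eq_sup (D a) ⟨{a}, hDa a⟩ card
      obtain ⟨hTpow, haT, hTcl⟩ := mem_filter.mp hTmem
      rw [mem_powerset] at hTpow
      have hTle : ∀ u ∈ T, u ≤ a := fun u hu => by
        have := mem_range.mp (hTpow hu); omega
      have hbT : b ∉ T := fun h => by have := hTle b h; omega
      have hins : insert b T ∈ D b := by
        refine mem_filter.mpr ⟨mem_powerset.mpr ?_, mem_insert_self b T, ?_⟩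
        · refine insert_subset (mem_range.mpr (by omega)) (hTpow.trans ?_)
          exact range_subset_range.mpr (by omega)
        · intro u hu v hv huv
          rcases mem_insert.mp hu with rfl | huT
          · rcases mem_insert.mp hv with rfl | hvT
            · omega
            · exact absurd (hTle v hvT) (by omega)
          · rcases mem_insert.mp hv with rfl | hvT
            · rcases eq_or_lt_of_le (hTle u huT) with rfl | hua
              · exact hfab
              · exact hc u a _ hua hab (hTcl u huT a haT hua) hfab
            · exact hTcl u huT v hvT huv
      have : T.card + 1 ≤ g b := by
        have hle := le_sup (f := card) hins
        rw [card_insert_of_notMem hbT] at hle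
        exact hle
      have hga : g a = T.card := hTsup
      omega
    have part1 : ∀ i a b : ℕ, g a = i → g b = i → a < b → f (x a) (x b) = 0 := by
      intro i a b hga hgb hab
      rcases fin2cases (f (x a) (x b)) with h | h
      · exact h
      · exact absurd (hg_mono a b hab h) (by omega)
    exact ⟨⟨k, g, hg_lt, part1⟩, pigeon f x hx k g hg_lt part1⟩
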